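/- Let q ≥ 1, n > 2q + 4, 1 ≤ ℓ ≤ q, and let y_1,…,y_n ∈ ℝ^ℓ. Set w_{ij} = exp(-‖y_i - y_j‖²) and, for z_1,…,z_n ∈ ℝ^q, let S_Z have entries s_{ij} = -‖z_i - z_j‖². Then the embedding Z* defined by z*_i = (y_i, 0, …, 0) ∈ ℝ^q (y_i padded with q-ℓ zeros) attains the entropic lower bound, L_W(S_{Z*}) = H(W), and every embedding Z with L_W(S_Z) = H(W) differs from Z* by a Euclidean isometry: there is an isometry f of ℝ^q with z_i = f(z*_i) for all i. -/

import Mathlib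

open scoped BigOperators

/-- The weighted InfoNCE loss. -/
noncomputable def infoNCE {n : ℕ} (W S : Matrix (Fin n) (Fin n) ℝ) : ℝ :=
  -(1 / (n : ℝ)) * ∑ i : Fin n, ∑ j ∈ Finset.univ.erase i,
    (W i j / ∑ k ∈ Finset.univ.erase i, W i k) *
      Real.log (Real.exp (S i j) / ∑ k ∈ Finset.univ.erase i, Real.exp (S i k))

/-- The entropic lower bound (with the convention `0 * log 0 = 0`,
which holds automatically since `Real.log 0 = 0`). -/
noncomputable def entropicBound {n : ℕ} (W : Matrix (Fin n) (Fin n) ℝ) : ℝ :=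
  -(1 / (n : ℝ)) * ∑ i : Fin n, ∑ j ∈ Finset.univ.erase i,
    (W i j / ∑ k ∈ Finset.univ.erase i, W i k) *
      Real.log (W i j / ∑ k ∈ Finset.univ.erase i, W i k)


/-- Latent similarity matrix `s_{ij} = -‖z_i - z_j‖²`. -/
noncomputable def SEucl {n q : ℕ} (z : Fin n → EuclideanSpace ℝ (Fin q)) :
    Matrix (Fin n) (Fin n) ℝ :=
  Matrix.of fun i j => -‖z i - z j‖ ^ 2

/-- Label-based weights `w_{ij} = exp(-‖y_i - y_j‖²)`. -/
noncomputable def Wlabel {n l : ℕ} (y : Fin n → EuclideanSpace ℝ (Fin l)) :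
    Matrix (Fin n) (Fin n) ℝ :=
  Matrix.of fun i j => Real.exp (-‖y i - y j‖ ^ 2)

/-- Padding of a vector of `ℝ^l` with `q - l` zeros, giving a vector of `ℝ^q`. -/
noncomputable def pad (l q : ℕ) (y : EuclideanSpace ℝ (Fin l)) : EuclideanSpace ℝ (Fin q) :=
  (WithLp.equiv 2 (Fin q → ℝ)).symm fun j =>
    if h : (j : ℕ) < l then (WithLp.equiv 2 (Fin l → ℝ)) y ⟨(j : ℕ), h⟩ else 0

/-! ### Auxiliary lemmas -/

lemma pad_apply (l q : ℕ) (v : EuclideanSpace ℝ (Fin l)) (j : Fin q) :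
    pad l q v j = if h : (j : ℕ) < l then v ⟨(j : ℕ), h⟩ else 0 := rfl

lemma norm_pad (l q : ℕ) (hlq : l ≤ q) (v : EuclideanSpace ℝ (Fin l)) :
    ‖pad l q v‖ = ‖v‖ := by
  rw [EuclideanSpace.norm_eq, EuclideanSpace.norm_eq]
  congr 1
  calc ∑ j : Fin q, ‖pad l q v j‖ ^ 2
      = ∑ j : Fin q, (fun m : ℕ => if h : m < l then ‖v ⟨m, h⟩‖ ^ 2 else 0) (j : ℕ) := by
        refine Finset.sum_congr rfl fun j _ => ?_
        rw [pad_apply]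
        by_cases h : (j : ℕ) < l
        · simp [h]
        · simp [h]
    _ = ∑ m ∈ Finset.range q, (fun m : ℕ => if h : m < l then ‖v ⟨m, h⟩‖ ^ 2 else 0) m :=
        Fin.sum_univ_eq_sum_range (fun m : ℕ => if h : m < l then ‖v ⟨m, h⟩‖ ^ 2 else 0) q
    _ = ∑ m ∈ Finset.range l, (fun m : ℕ => if h : m < l then ‖v ⟨m, h⟩‖ ^ 2 else 0) m := by
        refine (Finset.sum_subset (Finset.range_subset_range.2 hlq) ?_).symm
        intro m _ hm
        rw [Finset.mem_range] at hm
        simp [hm]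
    _ = ∑ m : Fin l, (fun m : ℕ => if h : m < l then ‖v ⟨m, h⟩‖ ^ 2 else 0) (m : ℕ) :=
        (Fin.sum_univ_eq_sum_range (fun m : ℕ => if h : m < l then ‖v ⟨m, h⟩‖ ^ 2 else 0) l).symm
    _ = ∑ m : Fin l, ‖v m‖ ^ 2 := by
        refine Finset.sum_congr rfl fun m _ => ?_
        simp [m.isLt]

lemma pad_sub (l q : ℕ) (a b : EuclideanSpace ℝ (Fin l)) :
    pad l q a - pad l q b = pad l q (a - b) := by
  ext j
  simp only [PiLp.sub_apply, pad_apply]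
  by_cases h : (j : ℕ) < l
  · simp [h]
  · simp [h]

lemma norm_pad_sub (l q : ℕ) (hlq : l ≤ q) (a b : EuclideanSpace ℝ (Fin l)) :
    ‖pad l q a - pad l q b‖ = ‖a - b‖ := by
  rw [pad_sub, norm_pad l q hlq]

lemma gibbs_term {pj qj : ℝ} (hp : 0 < pj) (hq : 0 < qj) :
    qj * Real.log pj - qj * Real.log qj - (pj - qj) ≤ 0 := by
  have h1 : Real.log (pj / qj) ≤ pj / qj - 1 :=
    Real.log_le_sub_one_of_pos (div_pos hp hq)
  have h2 : Real.log (pj / qj) = Real.log pj - Real.log qj :=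
    Real.log_div (ne_of_gt hp) (ne_of_gt hq)
  have h3 : qj * (pj / qj - 1) = pj - qj := by field_simp
  nlinarith [mul_le_mul_of_nonneg_left h1 (le_of_lt hq)]

lemma gibbs_term_eq {pj qj : ℝ} (hp : 0 < pj) (hq : 0 < qj)
    (h : qj * Real.log pj - qj * Real.log qj - (pj - qj) = 0) : pj = qj := by
  by_contra hne
  have hpq : pj / qj ≠ 1 := by
    intro h1
    exact hne (by field_simp at h1; linarith)
  have h1 : Real.log (pj / qj) < pj / qj - 1 :=
    Real.log_lt_sub_one_of_pos (div_pos hp hq) hpq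
  have h2 : Real.log (pj / qj) = Real.log pj - Real.log qj :=
    Real.log_div (ne_of_gt hp) (ne_of_gt hq)
  have h3 : qj * (pj / qj - 1) = pj - qj := by field_simp
  nlinarith [mul_lt_mul_of_pos_left h1 hq]

lemma gibbs_le {ι : Type*} (s : Finset ι) (p q : ι → ℝ)
    (hp : ∀ j ∈ s, 0 < p j) (hq : ∀ j ∈ s, 0 < q j)
    (hsum : ∑ j ∈ s, p j = ∑ j ∈ s, q j) :
    ∑ j ∈ s, q j * Real.log (p j) ≤ ∑ j ∈ s, q j * Real.log (q j) := by
  have key : ∑ j ∈ s, (q j * Real.log (p j) - q j * Real.log (q j) - (p j - q j)) ≤ 0 :=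
    Finset.sum_nonpos fun j hj => gibbs_term (hp j hj) (hq j hj)
  have expand : ∑ j ∈ s, (q j * Real.log (p j) - q j * Real.log (q j) - (p j - q j))
      = ∑ j ∈ s, q j * Real.log (p j) - ∑ j ∈ s, q j * Real.log (q j)
        - (∑ j ∈ s, p j - ∑ j ∈ s, q j) := by
    simp [Finset.sum_sub_distrib]
  rw [expand, hsum] at key
  linarith

lemma gibbs_eq {ι : Type*} (s : Finset ι) (p q : ι → ℝ)
    (hp : ∀ j ∈ s, 0 < p j) (hq : ∀ j ∈ s, 0 < q j)
    (hsum : ∑ j ∈ s, p j = ∑ j ∈ s, q j)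
    (heq : ∑ j ∈ s, q j * Real.log (p j) = ∑ j ∈ s, q j * Real.log (q j)) :
    ∀ j ∈ s, p j = q j := by
  have expand : ∑ j ∈ s, (q j * Real.log (p j) - q j * Real.log (q j) - (p j - q j))
      = ∑ j ∈ s, q j * Real.log (p j) - ∑ j ∈ s, q j * Real.log (q j)
        - (∑ j ∈ s, p j - ∑ j ∈ s, q j) := by
    simp [Finset.sum_sub_distrib]
  have hzero : ∑ j ∈ s, (q j * Real.log (p j) - q j * Real.log (q j) - (p j - q j)) = 0 := by
    rw [expand, hsum, heq]; ring
  have hterm := (Finset.sum_eq_zero_iff_of_nonpos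
    (fun j hj => gibbs_term (hp j hj) (hq j hj))).1 hzero
  exact fun j hj => gibbs_term_eq (hp j hj) (hq j hj) (hterm j hj)

lemma two_gram_rank_le {ι : Type*} [Fintype ι] [DecidableEq ι] {q : ℕ}
    (v w : ι → EuclideanSpace ℝ (Fin q)) :
    (Matrix.of fun i j => (inner ℝ (v i) (w j) : ℝ)).rank ≤ q := by
  have hfac : (Matrix.of fun i j => (inner ℝ (v i) (w j) : ℝ))
      = Matrix.transpose (Matrix.of fun (k : Fin q) i => v i k)
          * (Matrix.of fun (k : Fin q) j => w j k) := by
    ext i j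
    simp [Matrix.mul_apply, PiLp.inner_apply, RCLike.inner_apply, starRingEnd_apply, mul_comm]
  rw [hfac]
  exact le_trans (Matrix.rank_mul_le_right _ _)
    (le_trans (Matrix.rank_le_card_height _) (by simp))

lemma matrix_rank_add_le {ι : Type*} [Fintype ι] [DecidableEq ι] (A B : Matrix ι ι ℝ) :
    (A + B).rank ≤ A.rank + B.rank := by
  rw [Matrix.rank, Matrix.rank, Matrix.rank, Matrix.mulVecLin_add]
  have hr : LinearMap.range (A.mulVecLin + B.mulVecLin)
      ≤ LinearMap.range A.mulVecLin ⊔ LinearMap.range B.mulVecLin := by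
    rintro x ⟨c, rfl⟩
    exact Submodule.add_mem_sup (LinearMap.mem_range_self _ c) (LinearMap.mem_range_self _ c)
  exact le_trans (Submodule.finrank_mono hr)
    (Submodule.finrank_add_le_finrank_add_finrank _ _)

lemma ones_add_one_posDef {ι : Type*} [Fintype ι] [DecidableEq ι] :
    ((Matrix.of fun _ _ => (1 : ℝ)) + (1 : Matrix ι ι ℝ)).PosDef := by
  have hJ : (Matrix.of fun (_ _ : ι) => (1 : ℝ)).PosSemidef := by
    have : (Matrix.of fun (_ _ : ι) => (1 : ℝ))
        = Matrix.conjTranspose (Matrix.of fun (_ : Fin 1) (_ : ι) => (1 : ℝ))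
          * (Matrix.of fun (_ : Fin 1) (_ : ι) => (1 : ℝ)) := by
      ext i j
      simp [Matrix.mul_apply]
    rw [this]
    exact Matrix.posSemidef_conjTranspose_mul_self _
  have hone : (1 : Matrix ι ι ℝ).PosDef := by
    exact Matrix.PosDef.one
  exact Matrix.PosDef.posSemidef_add hJ hone

lemma smul_ones_add_one_rank {ι : Type*} [Fintype ι] [DecidableEq ι] {c : ℝ} (hc : c ≠ 0) :
    (c • ((Matrix.of fun _ _ => (1 : ℝ)) + (1 : Matrix ι ι ℝ))).rank = Fintype.card ι := by
  apply Matrix.rank_of_isUnit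
  rw [Matrix.isUnit_iff_isUnit_det, Matrix.det_smul, isUnit_iff_ne_zero]
  exact mul_ne_zero (pow_ne_zero _ hc) (ne_of_gt ones_add_one_posDef.det_pos)

lemma erase_nonempty {n : ℕ} (hn : 2 ≤ n) (i : Fin n) :
    (Finset.univ.erase i).Nonempty := by
  obtain ⟨j, hj⟩ := Fintype.exists_ne_of_one_lt_card (by rw [Fintype.card_fin]; omega) i
  exact ⟨j, Finset.mem_erase.2 ⟨hj, Finset.mem_univ _⟩⟩

lemma infoNCE_eq_iff {n : ℕ} (hn : 2 ≤ n) (W S : Matrix (Fin n) (Fin n) ℝ)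
    (hWpos : ∀ i j, 0 < W i j) :
    infoNCE W S = entropicBound W ↔
      ∀ i : Fin n, ∀ j ∈ Finset.univ.erase i,
        Real.exp (S i j) / (∑ k ∈ Finset.univ.erase i, Real.exp (S i k))
          = W i j / (∑ k ∈ Finset.univ.erase i, W i k) := by
  have hA : ∀ i : Fin n, 0 < ∑ k ∈ Finset.univ.erase i, Real.exp (S i k) :=
    fun i => Finset.sum_pos (fun k _ => Real.exp_pos _) (erase_nonempty hn i)
  have hB : ∀ i : Fin n, 0 < ∑ k ∈ Finset.univ.erase i, W i k :=
    fun i => Finset.sum_pos (fun k _ => hWpos i k) (erase_nonempty hn i)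
  have hppos : ∀ i : Fin n, ∀ j ∈ Finset.univ.erase i,
      0 < Real.exp (S i j) / (∑ k ∈ Finset.univ.erase i, Real.exp (S i k)) :=
    fun i j _ => div_pos (Real.exp_pos _) (hA i)
  have hqpos : ∀ i : Fin n, ∀ j ∈ Finset.univ.erase i,
      0 < W i j / (∑ k ∈ Finset.univ.erase i, W i k) :=
    fun i j _ => div_pos (hWpos i j) (hB i)
  have hsum : ∀ i : Fin n,
      ∑ j ∈ Finset.univ.erase i,
          Real.exp (S i j) / (∑ k ∈ Finset.univ.erase i, Real.exp (S i k))
        = ∑ j ∈ Finset.univ.erase i, W i j / (∑ k ∈ Finset.univ.erase i, W i k) := by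
    intro i
    rw [← Finset.sum_div, ← Finset.sum_div, div_self (ne_of_gt (hA i)),
      div_self (ne_of_gt (hB i))]
  have hle : ∀ i : Fin n,
      ∑ j ∈ Finset.univ.erase i, (W i j / ∑ k ∈ Finset.univ.erase i, W i k) *
          Real.log (Real.exp (S i j) / ∑ k ∈ Finset.univ.erase i, Real.exp (S i k))
        ≤ ∑ j ∈ Finset.univ.erase i, (W i j / ∑ k ∈ Finset.univ.erase i, W i k) *
          Real.log (W i j / ∑ k ∈ Finset.univ.erase i, W i k) :=
    fun i => gibbs_le (Finset.univ.erase i)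
      (fun j => Real.exp (S i j) / (∑ k ∈ Finset.univ.erase i, Real.exp (S i k)))
      (fun j => W i j / (∑ k ∈ Finset.univ.erase i, W i k))
      (hppos i) (hqpos i) (hsum i)
  have hn0 : -(1 / (n : ℝ)) ≠ 0 := by
    simp only [ne_eq, neg_eq_zero, div_eq_zero_iff, one_ne_zero, false_or, Nat.cast_eq_zero]
    omega
  constructor
  · intro h
    rw [infoNCE, entropicBound] at h
    have hsums := mul_left_cancel₀ hn0 h
    have hper := (Finset.sum_eq_sum_iff_of_le (fun i _ => hle i)).1 hsums
    intro i
    exact gibbs_eq (Finset.univ.erase i)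
      (fun j => Real.exp (S i j) / (∑ k ∈ Finset.univ.erase i, Real.exp (S i k)))
      (fun j => W i j / (∑ k ∈ Finset.univ.erase i, W i k))
      (hppos i) (hqpos i) (hsum i) (hper i (Finset.mem_univ i))
  · intro h
    rw [infoNCE, entropicBound]
    refine congrArg _ (Finset.sum_congr rfl fun i _ => Finset.sum_congr rfl fun j hj => ?_)
    rw [h i j hj]

/-- Euclidean w-InfoNCE with continuous labels: the zero-padded labels
attain the entropic lower bound, and any attaining embedding differs from them by a
Euclidean isometry. -/
theorem statement6 {n q l : ℕ} (hq : 1 ≤ q) (hn : 2 * q + 4 < n)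
    (hl : 1 ≤ l) (hlq : l ≤ q) (y : Fin n → EuclideanSpace ℝ (Fin l)) :
    infoNCE (Wlabel y) (SEucl fun i => pad l q (y i)) = entropicBound (Wlabel y) ∧
    (∀ z : Fin n → EuclideanSpace ℝ (Fin q),
      infoNCE (Wlabel y) (SEucl z) = entropicBound (Wlabel y) →
      ∃ f : EuclideanSpace ℝ (Fin q) ≃ᵢ EuclideanSpace ℝ (Fin q),
        ∀ i : Fin n, z i = f (pad l q (y i))) := by
  have hn2 : 2 ≤ n := by omega
  have hWpos : ∀ i j, 0 < Wlabel y i j := fun i j => Real.exp_pos _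
  have hexp : ∀ i j, Real.exp (SEucl (fun i => pad l q (y i)) i j) = Wlabel y i j := by
    intro i j
    show Real.exp (-‖pad l q (y i) - pad l q (y j)‖ ^ 2) = Real.exp (-‖y i - y j‖ ^ 2)
    rw [norm_pad_sub l q hlq]
  constructor
  · rw [infoNCE_eq_iff hn2 _ _ hWpos]
    intro i j hj
    simp only [hexp]
  · intro z hz
    have hAz : ∀ i : Fin n, 0 < ∑ k ∈ Finset.univ.erase i, Real.exp (SEucl z i k) :=
      fun i => Finset.sum_pos (fun k _ => Real.exp_pos _) (erase_nonempty hn2 i)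
    have hBz : ∀ i : Fin n, 0 < ∑ k ∈ Finset.univ.erase i, Wlabel y i k :=
      fun i => Finset.sum_pos (fun k _ => hWpos i k) (erase_nonempty hn2 i)
    have hratio := (infoNCE_eq_iff hn2 _ _ hWpos).1 hz
    set x : Fin n → EuclideanSpace ℝ (Fin q) := fun i => pad l q (y i) with hxdef
    set c : Fin n → ℝ := fun i =>
      Real.log (∑ k ∈ Finset.univ.erase i, Wlabel y i k)
        - Real.log (∑ k ∈ Finset.univ.erase i, Real.exp (SEucl z i k)) with hcdef
    have hkey : ∀ i j : Fin n, i ≠ j → ‖z i - z j‖ ^ 2 = ‖x i - x j‖ ^ 2 + c i := by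
      intro i j hij
      have hm : j ∈ Finset.univ.erase i := Finset.mem_erase.2 ⟨hij.symm, Finset.mem_univ _⟩
      have h2 := congrArg Real.log (hratio i j hm)
      rw [Real.log_div (Real.exp_ne_zero _) (ne_of_gt (hAz i)), Real.log_exp,
        Real.log_div (ne_of_gt (hWpos i j)) (ne_of_gt (hBz i))] at h2
      have h3 : Real.log (Wlabel y i j) = -‖y i - y j‖ ^ 2 := by
        show Real.log (Real.exp _) = _
        rw [Real.log_exp]
      have h4 : SEucl z i j = -‖z i - z j‖ ^ 2 := rfl
      have h5 : ‖x i - x j‖ = ‖y i - y j‖ := norm_pad_sub l q hlq _ _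
      rw [h3, h4] at h2
      rw [h5]
      simp only [hcdef]
      linarith
    set i0 : Fin n := ⟨0, by omega⟩ with hi0def
    have hc0 : ∀ i : Fin n, i ≠ i0 → c i = c i0 := by
      intro i hi
      have h1 := hkey i i0 hi
      have h2 := hkey i0 i (Ne.symm hi)
      rw [norm_sub_rev (z i0), norm_sub_rev (x i0)] at h2
      linarith
    have hC : ∀ i j : Fin n, i ≠ j → ‖z i - z j‖ ^ 2 = ‖x i - x j‖ ^ 2 + c i0 := by
      intro i j hij
      by_cases h : i = i0
      · rw [← h]; exact hkey i j hij
      · rw [← hc0 i h]; exact hkey i j hij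
    have hCzero : c i0 = 0 := by
      by_contra hcne
      have hvnorm : ∀ i : {i : Fin n // i ≠ i0},
          ‖z i.1 - z i0‖ ^ 2 = ‖x i.1 - x i0‖ ^ 2 + c i0 := fun i => hC i.1 i0 i.2
      have hpol : ∀ a b : EuclideanSpace ℝ (Fin q),
          (inner ℝ a b : ℝ) = (‖a‖ ^ 2 + ‖b‖ ^ 2 - ‖a - b‖ ^ 2) / 2 := by
        intro a b
        have := norm_sub_sq_real a b
        linarith
      have hgram :
          ((c i0 / 2) • ((Matrix.of fun _ _ : {i : Fin n // i ≠ i0} => (1 : ℝ)) + 1))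
            = (Matrix.of fun i j : {i : Fin n // i ≠ i0} =>
                (inner ℝ (z i.1 - z i0) (z j.1 - z i0) : ℝ))
              + (Matrix.of fun i j : {i : Fin n // i ≠ i0} =>
                (inner ℝ (-(x i.1 - x i0)) (x j.1 - x i0) : ℝ)) := by
        ext i j
        simp only [Matrix.add_apply, Matrix.smul_apply, Matrix.of_apply, smul_eq_mul,
          inner_neg_left]
        by_cases h : i = j
        · subst h
          rw [Matrix.one_apply_eq]
          rw [real_inner_self_eq_norm_sq, real_inner_self_eq_norm_sq]
          have := hvnorm i
          linear_combination -this
        · have hij : i.1 ≠ j.1 := fun hh => h (Subtype.ext hh)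
          rw [Matrix.one_apply_ne h]
          have hww : (z i.1 - z i0) - (z j.1 - z i0) = z i.1 - z j.1 := by abel
          have hvv : (x i.1 - x i0) - (x j.1 - x i0) = x i.1 - x j.1 := by abel
          rw [hpol ((z i.1 - z i0)) ((z j.1 - z i0)), hpol ((x i.1 - x i0)) ((x j.1 - x i0)),
            hww, hvv]
          have h1 := hvnorm i
          have h2 := hvnorm j
          have h3 := hC i.1 j.1 hij
          linear_combination (-1/2 : ℝ) * h1 + (-1/2 : ℝ) * h2 + (1/2 : ℝ) * h3
      have hrank1 :
          ((c i0 / 2) • ((Matrix.of fun _ _ : {i : Fin n // i ≠ i0} => (1 : ℝ)) + 1)).rank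
            = Fintype.card {i : Fin n // i ≠ i0} :=
        smul_ones_add_one_rank (div_ne_zero hcne two_ne_zero)
      have hrank2 :
          ((c i0 / 2) • ((Matrix.of fun _ _ : {i : Fin n // i ≠ i0} => (1 : ℝ)) + 1)).rank
            ≤ 2 * q := by
        rw [hgram]
        refine le_trans (matrix_rank_add_le _ _) ?_
        have g1 := two_gram_rank_le (fun i : {i : Fin n // i ≠ i0} => z i.1 - z i0)
          (fun i : {i : Fin n // i ≠ i0} => z i.1 - z i0)
        have g2 := two_gram_rank_le (fun i : {i : Fin n // i ≠ i0} => -(x i.1 - x i0))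
          (fun i : {i : Fin n // i ≠ i0} => x i.1 - x i0)
        omega
      have hcard : Fintype.card {i : Fin n // i ≠ i0} = n - 1 := by
        have h1 := Fintype.card_subtype_compl (fun i : Fin n => i = i0)
        have h2 : Fintype.card {i : Fin n // i = i0} = 1 := Fintype.card_subtype_eq i0
        simp only [Fintype.card_fin] at h1
        rw [h2] at h1
        exact h1
      rw [hrank1, hcard] at hrank2
      omega
    have hdist : ∀ i j : Fin n, ‖z i - z j‖ = ‖x i - x j‖ := by
      intro i j
      by_cases h : i = j
      · subst h; simp
      · have h1 := hC i j h
        rw [hCzero, add_zero] at h1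
        rw [← Real.sqrt_sq (norm_nonneg (z i - z j)), h1, Real.sqrt_sq (norm_nonneg _)]
    have hpol : ∀ a b : EuclideanSpace ℝ (Fin q),
        (inner ℝ a b : ℝ) = (‖a‖ ^ 2 + ‖b‖ ^ 2 - ‖a - b‖ ^ 2) / 2 := by
      intro a b
      have := norm_sub_sq_real a b
      linarith
    have hinner : ∀ i j : Fin n,
        (inner ℝ (x i - x i0) (x j - x i0) : ℝ) = inner ℝ (z i - z i0) (z j - z i0) := by
      intro i j
      rw [hpol, hpol]
      have h3 : (z i - z i0) - (z j - z i0) = z i - z j := by abel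
      have h4 : (x i - x i0) - (x j - x i0) = x i - x j := by abel
      rw [h3, h4, hdist i i0, hdist j i0, hdist i j]
    -- build the linear isometry
    set Amap : (Fin n → ℝ) →ₗ[ℝ] EuclideanSpace ℝ (Fin q) :=
      { toFun := fun cc => ∑ i : Fin n, cc i • (x i - x i0)
        map_add' := fun a b => by
          simp only [Pi.add_apply, add_smul]
          rw [Finset.sum_add_distrib]
        map_smul' := fun m a => by
          simp only [Pi.smul_apply, smul_eq_mul, RingHom.id_apply, ← smul_smul]
          rw [Finset.smul_sum] } with hAmapdef
    set Bmap : (Fin n → ℝ) →ₗ[ℝ] EuclideanSpace ℝ (Fin q) :=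
      { toFun := fun cc => ∑ i : Fin n, cc i • (z i - z i0)
        map_add' := fun a b => by
          simp only [Pi.add_apply, add_smul]
          rw [Finset.sum_add_distrib]
        map_smul' := fun m a => by
          simp only [Pi.smul_apply, smul_eq_mul, RingHom.id_apply, ← smul_smul]
          rw [Finset.smul_sum] } with hBmapdef
    have hAmapply : ∀ cc, Amap cc = ∑ i : Fin n, cc i • (x i - x i0) := fun _ => rfl
    have hBmapply : ∀ cc, Bmap cc = ∑ i : Fin n, cc i • (z i - z i0) := fun _ => rfl
    have hABinner : ∀ cc dd : Fin n → ℝ,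
        (inner ℝ (Amap cc) (Amap dd) : ℝ) = inner ℝ (Bmap cc) (Bmap dd) := by
      intro cc dd
      rw [hAmapply, hAmapply, hBmapply, hBmapply, sum_inner, sum_inner]
      refine Finset.sum_congr rfl fun i _ => ?_
      rw [inner_sum, inner_sum]
      refine Finset.sum_congr rfl fun j _ => ?_
      rw [real_inner_smul_left, real_inner_smul_left, real_inner_smul_right,
        real_inner_smul_right, hinner i j]
    have hABnorm : ∀ cc, ‖Amap cc‖ = ‖Bmap cc‖ := by
      intro cc
      rw [← Real.sqrt_sq (norm_nonneg (Amap cc)), ← Real.sqrt_sq (norm_nonneg (Bmap cc)),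
        ← real_inner_self_eq_norm_sq, ← real_inner_self_eq_norm_sq, hABinner]
    have hker : LinearMap.ker Amap ≤ LinearMap.ker Bmap := by
      intro cc hcc
      rw [LinearMap.mem_ker] at hcc ⊢
      have h1 := hABnorm cc
      rw [hcc, norm_zero] at h1
      exact norm_eq_zero.mp h1.symm
    set Tl : LinearMap.range Amap →ₗ[ℝ] EuclideanSpace ℝ (Fin q) :=
      ((LinearMap.ker Amap).liftQ Bmap hker).comp
        Amap.quotKerEquivRange.symm.toLinearMap with hTldef
    have hTl : ∀ (cc : Fin n → ℝ) (h : Amap cc ∈ LinearMap.range Amap),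
        Tl ⟨Amap cc, h⟩ = Bmap cc := by
      intro cc h
      have h2 : Amap.quotKerEquivRange.symm ⟨Amap cc, h⟩ = (LinearMap.ker Amap).mkQ cc :=
        LinearMap.quotKerEquivRange_symm_apply_image _ cc h
      show ((LinearMap.ker Amap).liftQ Bmap hker) (Amap.quotKerEquivRange.symm ⟨Amap cc, h⟩)
        = Bmap cc
      rw [h2, Submodule.mkQ_apply, Submodule.liftQ_apply]
    have hTliso : ∀ s : LinearMap.range Amap, ‖Tl s‖ = ‖s‖ := by
      rintro ⟨s, hs⟩
      obtain ⟨cc, rfl⟩ := hs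
      rw [hTl cc (LinearMap.mem_range_self _ cc)]
      rw [← hABnorm cc]
      rfl
    set L : LinearMap.range Amap →ₗᵢ[ℝ] EuclideanSpace ℝ (Fin q) := ⟨Tl, hTliso⟩ with hLdef
    set g : EuclideanSpace ℝ (Fin q) ≃ₗᵢ[ℝ] EuclideanSpace ℝ (Fin q) :=
      L.extend.toLinearIsometryEquiv rfl with hgdef
    have hgapply : ∀ (a : EuclideanSpace ℝ (Fin q)) (h : a ∈ LinearMap.range Amap),
        g a = Tl ⟨a, h⟩ := by
      intro a h
      have h1 : g a = L.extend a := L.extend.toLinearIsometryEquiv_apply rfl a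
      rw [h1]
      exact L.extend_apply ⟨a, h⟩
    refine ⟨⟨⟨fun p => g (p - x i0) + z i0, fun p => g.symm (p - z i0) + x i0,
      fun p => by simp, fun p => by simp⟩, ?_⟩, ?_⟩
    · apply Isometry.of_dist_eq
      intro p p'
      simp only [Equiv.coe_fn_mk]
      rw [dist_eq_norm, dist_eq_norm]
      have h1 : g (p - x i0) + z i0 - (g (p' - x i0) + z i0)
          = g (p - x i0) - g (p' - x i0) := by abel
      rw [h1, ← g.map_sub]
      rw [g.norm_map]
      congr 1
      abel
    · intro i
      show z i = g (x i - x i0) + z i0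
      have hmem : x i - x i0 ∈ LinearMap.range Amap := by
        refine ⟨Pi.single i 1, ?_⟩
        rw [hAmapply]
        rw [Finset.sum_eq_single i]
        · simp
        · intro b _ hb
          simp [Pi.single_eq_of_ne hb]
        · intro hb
          exact absurd (Finset.mem_univ i) hb
      have hsingle : Amap (Pi.single i 1) = x i - x i0 := by
        rw [hAmapply]
        rw [Finset.sum_eq_single i]
        · simp
        · intro b _ hb
          simp [Pi.single_eq_of_ne hb]
        · intro hb
          exact absurd (Finset.mem_univ i) hb
      rw [hgapply (x i - x i0) hmem]
      have heq2 : (⟨x i - x i0, hmem⟩ : LinearMap.range Amap)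
          = ⟨Amap (Pi.single i 1), LinearMap.mem_range_self _ _⟩ := Subtype.ext hsingle.symm
      rw [heq2, hTl]
      rw [hBmapply]
      rw [Finset.sum_eq_single i]
      · simp
      · intro b _ hb
        simp [Pi.single_eq_of_ne hb]
      · intro hb
        exact absurd (Finset.mem_univ i) hb
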